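/- Let A and B be C*-algebras and let f : A → B be a mapping with f(0) = 0 for which there exists a function φ : A × A × A → [0,∞) such that (i) Σ_{i=1}^{∞} 3^{−i} φ(3^i a, 3^i b, 3^i c) < ∞ for all a, b, c ∈ A, (ii) lim_{n→∞} 3^{−2n} φ(3^n a, 3^n b, 3^n c) = 0 for all a, b, c ∈ A, (iii) ‖f(a*) − f(a)*‖ ≤ φ(a, a, a) for all a ∈ A, and (iv) ‖f((μb−a)/3) + f((a−3c)/3) + μ·f((3a−b)/3 + c) − f(a) + f(c²) − f(c)²‖ ≤ φ(a, b, c) for all a, b, c ∈ A and all μ ∈ 𝕋¹. Then there exists a unique Jordan *-homomorphism h : A → B such that ‖h(a) − f(a)‖ ≤ Σ_{i=1}^{∞} 3^{−i} φ(3^i a, 2·3^i a, 0) for all a ∈ A. -/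

import Mathlib

open Filter

/-- Generalized Hyers–Ulam stability of Jordan *-homomorphisms (expansion direction). -/
theorem stmt_7
    {A B : Type*}
    [NormedRing A] [StarRing A] [CStarRing A] [NormedAlgebra ℂ A] [StarModule ℂ A]
    [CompleteSpace A]
    [NormedRing B] [StarRing B] [CStarRing B] [NormedAlgebra ℂ B] [StarModule ℂ B]
    [CompleteSpace B]
    (f : A → B) (hf0 : f 0 = 0)
    (φ : A → A → A → ℝ) (hφ : ∀ a b c : A, 0 ≤ φ a b c)
    (hsum : ∀ a b c : A, Summable (fun i : ℕ =>
      ((3:ℝ)^(i+1))⁻¹ * φ ((3:ℂ)^(i+1) • a) ((3:ℂ)^(i+1) • b) ((3:ℂ)^(i+1) • c)))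
    (hlim : ∀ a b c : A, Tendsto (fun n : ℕ =>
      ((3:ℝ)^(2*n))⁻¹ * φ ((3:ℂ)^n • a) ((3:ℂ)^n • b) ((3:ℂ)^n • c))
      atTop (nhds 0))
    (hstar : ∀ a : A, ‖f (star a) - star (f a)‖ ≤ φ a a a)
    (hineq : ∀ μ : ℂ, ‖μ‖ = 1 → ∀ a b c : A,
      ‖f ((3:ℂ)⁻¹ • (μ • b - a)) + f ((3:ℂ)⁻¹ • (a - (3:ℂ) • c)) +
        μ • f ((3:ℂ)⁻¹ • ((3:ℂ) • a - b) + c) - f a + f (c ^ 2) - (f c) ^ 2‖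
        ≤ φ a b c) :
    ∃! h : A → B,
      (IsLinearMap ℂ h ∧ (∀ a : A, h (a ^ 2) = (h a) ^ 2) ∧
        (∀ a : A, h (star a) = star (h a))) ∧
      ∀ a : A, ‖h a - f a‖ ≤
        ∑' i : ℕ, ((3:ℝ)^(i+1))⁻¹ *
          φ ((3:ℂ)^(i+1) • a) ((2:ℂ) • ((3:ℂ)^(i+1) • a)) 0 := by
  -- the approximating sequence
  set u : A → ℕ → B := fun a n => ((3:ℂ)^n)⁻¹ • f ((3:ℂ)^n • a) with hu_def
  set D : A → ℕ → ℝ := fun a i =>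
    ((3:ℝ)^(i+1))⁻¹ * φ ((3:ℂ)^(i+1) • a) ((2:ℂ) • ((3:ℂ)^(i+1) • a)) 0 with hD_def
  have hDsum : ∀ a : A, Summable (D a) := by
    intro a
    have := hsum a ((2:ℂ) • a) 0
    refine this.congr fun i => ?_
    simp only [hD_def, smul_zero]
    congr 2
    · exact (smul_comm _ _ _)
  -- key inequality
  have key : ∀ a : A, ‖f a + f a + f a - f ((3:ℂ) • a)‖
      ≤ φ ((3:ℂ) • a) ((2:ℂ) • ((3:ℂ) • a)) 0 := by
    intro a
    have h1 := hineq 1 (by simp) ((3:ℂ) • a) ((2:ℂ) • ((3:ℂ) • a)) 0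
    rw [show (3:ℂ)⁻¹ • ((1:ℂ) • ((2:ℂ) • ((3:ℂ) • a)) - (3:ℂ) • a) = a by module,
        show (3:ℂ)⁻¹ • ((3:ℂ) • a - (3:ℂ) • (0:A)) = a by module,
        show (3:ℂ)⁻¹ • ((3:ℂ) • ((3:ℂ) • a) - (2:ℂ) • ((3:ℂ) • a)) + (0:A) = a by module]
        at h1
    simpa [hf0] using h1
  -- Cauchy estimate
  have hdist : ∀ a : A, ∀ n : ℕ, dist (u a n) (u a (n+1)) ≤ D a n := by
    intro a n
    have e1 : (3:ℂ)^(n+1) • a = (3:ℂ) • ((3:ℂ)^n • a) := by module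
    have e2 : u a n - u a (n+1) = ((3:ℂ)^(n+1))⁻¹ •
        (f ((3:ℂ)^n • a) + f ((3:ℂ)^n • a) + f ((3:ℂ)^n • a) - f ((3:ℂ)^(n+1) • a)) := by
      simp only [hu_def]
      module
    rw [dist_eq_norm, e2, norm_smul]
    have hkey := key ((3:ℂ)^n • a)
    rw [← e1] at hkey
    have hn : ‖((3:ℂ)^(n+1))⁻¹‖ = ((3:ℝ)^(n+1))⁻¹ := by
      simp
    rw [hn, hD_def]
    exact mul_le_mul_of_nonneg_left hkey (by positivity)
  have hcau : ∀ a : A, CauchySeq (u a) := fun a =>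
    cauchySeq_of_dist_le_of_summable (D a) (hdist a) (hDsum a)
  set h : A → B := fun a => limUnder atTop (u a) with hh_def
  have hu : ∀ a : A, Tendsto (u a) atTop (nhds (h a)) := fun a => (hcau a).tendsto_limUnder
  have hbound : ∀ a : A, ‖h a - f a‖ ≤ ∑' i, D a i := by
    intro a
    have h0 : u a 0 = f a := by simp [hu_def]
    have := dist_le_tsum_of_dist_le_of_tendsto₀ (D a) (hdist a) (hDsum a) (hu a)
    rw [h0, dist_eq_norm, ← norm_sub_rev] at this
    exact this
  -- scaled φ(·,·,0) tends to zero (rate 3^{-n})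
  have htend0 : ∀ a b c : A, Tendsto
      (fun n : ℕ => ((3:ℝ)^n)⁻¹ * φ ((3:ℂ)^n • a) ((3:ℂ)^n • b) ((3:ℂ)^n • c))
      atTop (nhds 0) := by
    intro a b c
    have h1 := (hsum a b c).tendsto_atTop_zero
    rw [← tendsto_add_atTop_iff_nat 1]
    exact h1
  -- the limiting functional equation (c = 0)
  have hE : ∀ μ : ℂ, ‖μ‖ = 1 → ∀ a b : A,
      h ((3:ℂ)⁻¹ • (μ • b - a)) + h ((3:ℂ)⁻¹ • a) + μ • h ((3:ℂ)⁻¹ • ((3:ℂ) • a - b)) = h a := by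
    intro μ hμ a b
    have hT1 : Tendsto (fun n => u ((3:ℂ)⁻¹ • (μ • b - a)) n + u ((3:ℂ)⁻¹ • a) n
        + μ • u ((3:ℂ)⁻¹ • ((3:ℂ) • a - b)) n - u a n) atTop
        (nhds (h ((3:ℂ)⁻¹ • (μ • b - a)) + h ((3:ℂ)⁻¹ • a)
          + μ • h ((3:ℂ)⁻¹ • ((3:ℂ) • a - b)) - h a)) :=
      (((hu _).add (hu _)).add ((hu _).const_smul μ)).sub (hu a)
    have hnorm : ∀ n : ℕ, ‖u ((3:ℂ)⁻¹ • (μ • b - a)) n + u ((3:ℂ)⁻¹ • a) n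
        + μ • u ((3:ℂ)⁻¹ • ((3:ℂ) • a - b)) n - u a n‖
        ≤ ((3:ℝ)^n)⁻¹ * φ ((3:ℂ)^n • a) ((3:ℂ)^n • b) 0 := by
      intro n
      have eS : u ((3:ℂ)⁻¹ • (μ • b - a)) n + u ((3:ℂ)⁻¹ • a) n
          + μ • u ((3:ℂ)⁻¹ • ((3:ℂ) • a - b)) n - u a n = ((3:ℂ)^n)⁻¹ •
          (f ((3:ℂ)⁻¹ • (μ • ((3:ℂ)^n • b) - (3:ℂ)^n • a))
            + f ((3:ℂ)⁻¹ • ((3:ℂ)^n • a - 0))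
            + μ • f ((3:ℂ)⁻¹ • ((3:ℂ) • ((3:ℂ)^n • a) - (3:ℂ)^n • b) + (0:A))
            - f ((3:ℂ)^n • a) + f ((0:A)^2) - (f (0:A))^2) := by
        rw [show (3:ℂ)⁻¹ • (μ • ((3:ℂ)^n • b) - (3:ℂ)^n • a)
              = (3:ℂ)^n • ((3:ℂ)⁻¹ • (μ • b - a)) by module,
            show (3:ℂ)⁻¹ • ((3:ℂ)^n • a - 0) = (3:ℂ)^n • ((3:ℂ)⁻¹ • a) by module,
            show (3:ℂ)⁻¹ • ((3:ℂ) • ((3:ℂ)^n • a) - (3:ℂ)^n • b) + (0:A)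
              = (3:ℂ)^n • ((3:ℂ)⁻¹ • ((3:ℂ) • a - b)) by module]
        simp only [hu_def]
        have h02 : f ((0:A)^2) = 0 := by simpa using hf0
        rw [h02, hf0]
        simp only [ne_eq, OfNat.ofNat_ne_zero, not_false_eq_true, zero_pow]
        module
      rw [eS, norm_smul]
      have hn : ‖((3:ℂ)^n)⁻¹‖ = ((3:ℝ)^n)⁻¹ := by simp
      rw [hn]
      have hI := hineq μ hμ ((3:ℂ)^n • a) ((3:ℂ)^n • b) 0
      rw [smul_zero] at hI
      exact mul_le_mul_of_nonneg_left hI (by positivity)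
    have hT0 : Tendsto (fun n => u ((3:ℂ)⁻¹ • (μ • b - a)) n + u ((3:ℂ)⁻¹ • a) n
        + μ • u ((3:ℂ)⁻¹ • ((3:ℂ) • a - b)) n - u a n) atTop (nhds 0) :=
      squeeze_zero_norm hnorm (by simpa using htend0 a b 0)
    have := tendsto_nhds_unique hT1 hT0
    linear_combination (norm := module) this
  -- h 0 = 0
  have h0 : h 0 = 0 := by
    have : Tendsto (u 0) atTop (nhds 0) := by
      have : u 0 = fun _ => (0:B) := by
        funext n; simp [hu_def, hf0]
      rw [this]; exact tendsto_const_nhds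
    exact tendsto_nhds_unique (hu 0) this
  -- h is odd
  have hodd : ∀ x : A, h (-x) = - h x := by
    intro x
    have := hE 1 (by simp) 0 ((3:ℂ) • x)
    rw [show (3:ℂ)⁻¹ • ((1:ℂ) • ((3:ℂ) • x) - 0) = x by module,
        show (3:ℂ)⁻¹ • (0:A) = 0 by module,
        show (3:ℂ)⁻¹ • ((3:ℂ) • (0:A) - (3:ℂ) • x) = -x by module] at this
    rw [h0, one_smul] at this
    linear_combination (norm := module) this
  -- additivity
  have hadd : ∀ x y : A, h (x + y) = h x + h y := by
    intro v w
    have e1 := hE 1 (by simp) ((3/2:ℂ) • (v + w)) ((3/2:ℂ) • (v + w) + (3:ℂ) • v)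
    have e2 := hE 1 (by simp) ((3/2:ℂ) • (v + w)) ((3/2:ℂ) • (v + w) + (3:ℂ) • (v + w))
    rw [show (3:ℂ)⁻¹ • ((1:ℂ) • ((3/2:ℂ) • (v + w) + (3:ℂ) • v) - (3/2:ℂ) • (v + w)) = v
          by module,
        show (3:ℂ)⁻¹ • ((3:ℂ) • ((3/2:ℂ) • (v + w)) - ((3/2:ℂ) • (v + w) + (3:ℂ) • v)) = w
          by module, one_smul] at e1
    rw [show (3:ℂ)⁻¹ • ((1:ℂ) • ((3/2:ℂ) • (v + w) + (3:ℂ) • (v + w)) - (3/2:ℂ) • (v + w))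
          = v + w by module,
        show (3:ℂ)⁻¹ • ((3:ℂ) • ((3/2:ℂ) • (v + w)) - ((3/2:ℂ) • (v + w) + (3:ℂ) • (v + w)))
          = 0 by module, one_smul, h0] at e2
    linear_combination (norm := module) e2 - e1
  -- unit scalars
  have hunit : ∀ μ : ℂ, ‖μ‖ = 1 → ∀ x : A, h (μ • x) = μ • h x := by
    intro μ hμ x
    have := hE μ hμ 0 ((3:ℂ) • x)
    rw [show (3:ℂ)⁻¹ • (μ • ((3:ℂ) • x) - 0) = μ • x by module,
        show (3:ℂ)⁻¹ • (0:A) = 0 by module,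
        show (3:ℂ)⁻¹ • ((3:ℂ) • (0:A) - (3:ℂ) • x) = -x by module, h0, hodd x] at this
    linear_combination (norm := module) this
  -- natural number scalars
  have hnat : ∀ (n : ℕ) (x : A), h ((n:ℂ) • x) = (n:ℂ) • h x := by
    intro n x
    induction n with
    | zero => simpa using h0
    | succ k ih =>
      have : ((k+1:ℕ):ℂ) • x = (k:ℂ) • x + x := by push_cast; module
      rw [this, hadd, ih]
      push_cast
      module
  -- real scalars in [-1,1]
  have hsmall : ∀ t : ℝ, |t| ≤ 1 → ∀ x : A, h ((t:ℂ) • x) = (t:ℂ) • h x := by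
    intro t ht x
    have h1 : t^2 ≤ 1 := by nlinarith [abs_nonneg t, sq_abs t]
    set s : ℝ := Real.sqrt (1 - t^2) with hs_def
    have hs2 : s^2 = 1 - t^2 := Real.sq_sqrt (by linarith)
    set μ : ℂ := ⟨t, s⟩ with hμ_def
    have hμn : ‖μ‖ = 1 := by
      have : Complex.normSq μ = 1 := by
        simp only [Complex.normSq_mk, hμ_def]
        nlinarith
      rw [Complex.norm_def, this, Real.sqrt_one]
    have hconj : ‖(starRingEnd ℂ) μ‖ = 1 := by rwa [RCLike.norm_conj]
    have hsum2 : μ + (starRingEnd ℂ) μ = (2:ℂ) * (t:ℂ) := by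
      rw [Complex.add_conj]
      simp [hμ_def]
    have e1 : h (((2:ℂ) * (t:ℂ)) • x) = (2:ℂ) • h ((t:ℂ) • x) := by
      rw [show ((2:ℂ) * (t:ℂ)) • x = (t:ℂ) • x + (t:ℂ) • x by module, hadd]
      module
    have e2 : h (((2:ℂ) * (t:ℂ)) • x) = (2:ℂ) • ((t:ℂ) • h x) := by
      rw [← hsum2, show (μ + (starRingEnd ℂ) μ) • x = μ • x + (starRingEnd ℂ) μ • x by module,
        hadd, hunit μ hμn, hunit _ hconj, ← add_smul, hsum2]
      module
    have := e1.symm.trans e2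
    exact smul_right_injective B two_ne_zero this
  -- all real scalars
  have hreal : ∀ (t : ℝ) (x : A), h ((t:ℂ) • x) = (t:ℂ) • h x := by
    intro t x
    obtain ⟨n, hn_eq⟩ : ∃ m : ℕ, m = ⌈|t|⌉₊ + 1 := ⟨_, rfl⟩
    have hn0 : (n:ℝ) ≠ 0 := by rw [hn_eq]; positivity
    have hnC : (n:ℂ) ≠ 0 := by exact_mod_cast hn0
    have hle : |t| ≤ (n:ℝ) := by
      rw [hn_eq]
      push_cast
      linarith [Nat.le_ceil |t|]
    have h1 : |t / n| ≤ 1 := by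
      rw [abs_div, abs_of_nonneg (by positivity : (0:ℝ) ≤ (n:ℝ))]
      exact div_le_one_of_le₀ hle (by positivity)
    have hscal : (n:ℂ) * ((t/n : ℝ):ℂ) = (t:ℂ) := by
      push_cast
      field_simp
    have e : (t:ℂ) • x = (n:ℂ) • (((t/n:ℝ):ℂ) • x) := by rw [smul_smul, hscal]
    rw [e, hnat, hsmall _ h1, smul_smul, hscal]
  -- all complex scalars
  have hsmulC : ∀ (c : ℂ) (x : A), h (c • x) = c • h x := by
    intro c x
    rcases eq_or_ne c 0 with rfl | hc
    · simpa using h0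
    · have hnc : ‖c‖ ≠ 0 := by simpa using hc
      have hC : ((‖c‖:ℝ):ℂ) ≠ 0 := by exact_mod_cast hnc
      have hscal : ((‖c‖:ℝ):ℂ) * (c * ((‖c‖:ℝ):ℂ)⁻¹) = c := by
        rw [mul_comm, mul_assoc, inv_mul_cancel₀ hC, mul_one]
      have hμ : ‖c * ((‖c‖:ℝ):ℂ)⁻¹‖ = 1 := by
        rw [norm_mul, norm_inv, Complex.norm_real, norm_norm, mul_inv_cancel₀ hnc]
      have e : c • x = ((‖c‖:ℝ):ℂ) • ((c * ((‖c‖:ℝ):ℂ)⁻¹) • x) := by rw [smul_smul, hscal]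
      rw [e, hreal, hunit _ hμ, smul_smul, hscal]
  -- Jordan property
  have hJordan : ∀ c : A, h (c ^ 2) = (h c) ^ 2 := by
    intro c
    have hVle : ∀ n : ℕ,
        ‖((3:ℂ)^n)⁻¹ • u (-c) n + ((3:ℂ)^n)⁻¹ • u c n + u (c^2) (2*n) - (u c n)^2‖
          ≤ ((3:ℝ)^(2*n))⁻¹ * φ 0 0 ((3:ℂ)^n • c) := by
      intro n
      have hI := hineq 1 (by simp) 0 0 ((3:ℂ)^n • c)
      rw [show (3:ℂ)⁻¹ • ((1:ℂ) • (0:A) - 0) = 0 by module,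
          show (3:ℂ)⁻¹ • ((0:A) - (3:ℂ) • ((3:ℂ)^n • c)) = (3:ℂ)^n • (-c) by module,
          show (3:ℂ)⁻¹ • ((3:ℂ) • (0:A) - 0) + (3:ℂ)^n • c = (3:ℂ)^n • c by module,
          one_smul, hf0] at hI
      simp only [zero_add, sub_zero] at hI
      have ec2 : ((3:ℂ)^n • c)^2 = (3:ℂ)^(2*n) • c^2 := by
        rw [smul_pow, ← pow_mul, Nat.mul_comm]
      have esq : (u c n)^2 = ((3:ℂ)^(2*n))⁻¹ • (f ((3:ℂ)^n • c))^2 := by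
        simp only [hu_def]
        rw [smul_pow, inv_pow, ← pow_mul, Nat.mul_comm]
      have eV : ((3:ℂ)^n)⁻¹ • u (-c) n + ((3:ℂ)^n)⁻¹ • u c n + u (c^2) (2*n) - (u c n)^2
          = ((3:ℂ)^(2*n))⁻¹ • (f ((3:ℂ)^n • (-c)) + f ((3:ℂ)^n • c)
              + f (((3:ℂ)^n • c)^2) - (f ((3:ℂ)^n • c))^2) := by
        rw [esq, ec2]
        simp only [hu_def]
        module
      rw [eV, norm_smul]
      have hn2 : ‖((3:ℂ)^(2*n))⁻¹‖ = ((3:ℝ)^(2*n))⁻¹ := by simp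
      rw [hn2]
      exact mul_le_mul_of_nonneg_left hI (by positivity)
    have tz : Tendsto (fun n : ℕ => ((3:ℂ)^n)⁻¹) atTop (nhds 0) := by
      have h31 : ‖(3:ℂ)⁻¹‖ < 1 := by
        rw [norm_inv, show ‖(3:ℂ)‖ = 3 by simp]
        norm_num
      simpa [inv_pow] using tendsto_pow_atTop_nhds_zero_of_norm_lt_one h31
    have h2n : Tendsto (fun n : ℕ => 2*n) atTop atTop :=
      tendsto_atTop_mono (fun n => Nat.le_mul_of_pos_left n two_pos) tendsto_id
    have hT1 : Tendsto (fun n => ((3:ℂ)^n)⁻¹ • u (-c) n + ((3:ℂ)^n)⁻¹ • u c n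
        + u (c^2) (2*n) - (u c n)^2) atTop
        (nhds (((0:ℂ) • h (-c) + (0:ℂ) • h c + h (c^2)) - (h c)^2)) :=
      (((tz.smul (hu (-c))).add (tz.smul (hu c))).add ((hu (c^2)).comp h2n)).sub ((hu c).pow 2)
    have hT0 : Tendsto (fun n => ((3:ℂ)^n)⁻¹ • u (-c) n + ((3:ℂ)^n)⁻¹ • u c n
        + u (c^2) (2*n) - (u c n)^2) atTop (nhds 0) :=
      squeeze_zero_norm hVle (by simpa using hlim 0 0 c)
    have := tendsto_nhds_unique hT1 hT0
    linear_combination (norm := module) this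
  -- star property
  have hstar' : ∀ a : A, h (star a) = star (h a) := by
    intro a
    have e1 : ∀ n : ℕ, (3:ℂ)^n • star a = star ((3:ℂ)^n • a) := by
      intro n
      rw [star_smul]
      congr 1
      rw [star_pow]
      norm_num
    have e2 : ∀ n : ℕ, star (u a n) = ((3:ℂ)^n)⁻¹ • star (f ((3:ℂ)^n • a)) := by
      intro n
      simp only [hu_def, star_smul]
      congr 1
      rw [star_inv₀, star_pow]
      norm_num
    have hW : ∀ n : ℕ, ‖u (star a) n - star (u a n)‖
        ≤ ((3:ℝ)^n)⁻¹ * φ ((3:ℂ)^n • a) ((3:ℂ)^n • a) ((3:ℂ)^n • a) := by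
      intro n
      have eW : u (star a) n - star (u a n)
          = ((3:ℂ)^n)⁻¹ • (f (star ((3:ℂ)^n • a)) - star (f ((3:ℂ)^n • a))) := by
        rw [e2]
        simp only [hu_def, e1]
        module
      rw [eW, norm_smul, show ‖((3:ℂ)^n)⁻¹‖ = ((3:ℝ)^n)⁻¹ by simp]
      exact mul_le_mul_of_nonneg_left (hstar ((3:ℂ)^n • a)) (by positivity)
    have hT1 : Tendsto (fun n => u (star a) n - star (u a n)) atTop
        (nhds (h (star a) - star (h a))) := (hu (star a)).sub (hu a).star
    have hT0 : Tendsto (fun n => u (star a) n - star (u a n)) atTop (nhds 0) :=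
      squeeze_zero_norm hW (htend0 a a a)
    have := tendsto_nhds_unique hT1 hT0
    linear_combination (norm := module) this
  -- assemble
  refine ⟨h, ⟨⟨⟨hadd, hsmulC⟩, hJordan, hstar'⟩, fun a => hbound a⟩, ?_⟩
  rintro h' ⟨⟨hlin', _, _⟩, hb'⟩
  funext x
  have key2 : ∀ n : ℕ, ‖h' x - h x‖ ≤ 2 * ∑' i, D x (i + n) := by
    intro n
    have e : h' x - h x = ((3:ℂ)^n)⁻¹ • (h' ((3:ℂ)^n • x) - h ((3:ℂ)^n • x)) := by
      have h3n : ((3:ℂ)^n) ≠ 0 := pow_ne_zero _ (by norm_num)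
      rw [hlin'.map_smul, hsmulC, smul_sub, smul_smul, smul_smul,
        inv_mul_cancel₀ h3n, one_smul, one_smul]
    have etail : ((3:ℝ)^n)⁻¹ * ∑' i, D ((3:ℂ)^n • x) i = ∑' i, D x (i + n) := by
      rw [← tsum_mul_left]
      refine tsum_congr fun i => ?_
      simp only [hD_def]
      rw [show (3:ℂ)^(i+1) • ((3:ℂ)^n • x) = (3:ℂ)^(i+n+1) • x by module]
      ring
    calc ‖h' x - h x‖ = ((3:ℝ)^n)⁻¹ * ‖h' ((3:ℂ)^n • x) - h ((3:ℂ)^n • x)‖ := by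
          rw [e, norm_smul, show ‖((3:ℂ)^n)⁻¹‖ = ((3:ℝ)^n)⁻¹ by simp]
      _ ≤ ((3:ℝ)^n)⁻¹ * (‖h' ((3:ℂ)^n • x) - f ((3:ℂ)^n • x)‖
            + ‖h ((3:ℂ)^n • x) - f ((3:ℂ)^n • x)‖) := by
          refine mul_le_mul_of_nonneg_left ?_ (by positivity)
          rw [show h' ((3:ℂ)^n • x) - h ((3:ℂ)^n • x)
              = (h' ((3:ℂ)^n • x) - f ((3:ℂ)^n • x)) - (h ((3:ℂ)^n • x) - f ((3:ℂ)^n • x))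
              by abel]
          exact norm_sub_le _ _
      _ ≤ ((3:ℝ)^n)⁻¹ * (∑' i, D ((3:ℂ)^n • x) i + ∑' i, D ((3:ℂ)^n • x) i) := by
          refine mul_le_mul_of_nonneg_left (add_le_add ?_ (hbound _)) (by positivity)
          exact hb' ((3:ℂ)^n • x)
      _ = 2 * (((3:ℝ)^n)⁻¹ * ∑' i, D ((3:ℂ)^n • x) i) := by ring
      _ = 2 * ∑' i, D x (i + n) := by rw [etail]
  have hto : Tendsto (fun n : ℕ => 2 * ∑' i, D x (i + n)) atTop (nhds 0) := by
    have ht := tendsto_sum_nat_add (f := D x)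
    simpa using ht.const_mul 2
  have hle0 : ‖h' x - h x‖ ≤ 0 := ge_of_tendsto' hto key2
  have := norm_le_zero_iff.mp hle0
  exact sub_eq_zero.mp this
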